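/- Let n ≥ 2 and let t satisfy ⌈n/2⌉ < t ≤ n. Then exactly two connected components of the t-graph Γ(2,n,t) of the dihedral group D_n contain more than one vertex, and each of these two components has exactly 2(n − t) + 2 vertices. -/

import Mathlib

/-- The `t`-graph `Γ(m,n,t)`: vertices are `Fin m × Fin n` (the vertex `(i,j)` encoding
`a^i b^j`), and two distinct vertices `(i,j)`, `(k,l)` are adjacent iff
`|i - k| + |j - l| = t` (comparing coordinates as integers). -/
def tGraph (m n t : ℕ) : SimpleGraph (Fin m × Fin n) where
  Adj x y := x ≠ y ∧ |(x.1 : ℤ) - (y.1 : ℤ)| + |(x.2 : ℤ) - (y.2 : ℤ)| = t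
  symm := by
    constructor
    rintro x y ⟨h1, h2⟩
    exact ⟨h1.symm, by rw [abs_sub_comm ((y.1 : ℤ)), abs_sub_comm ((y.2 : ℤ))]; exact h2⟩
  loopless := ⟨fun x ⟨h, _⟩ => h rfl⟩

instance (m n t : ℕ) : DecidableRel (tGraph m n t).Adj := fun x y =>
  inferInstanceAs (Decidable (x ≠ y ∧ |(x.1 : ℤ) - (y.1 : ℤ)| + |(x.2 : ℤ) - (y.2 : ℤ)| = t))

namespace TGraphAux

/-- membership predicate for the component of `(0,0)` -/
def cpred (n t : ℕ) (v : Fin 2 × Fin n) : Prop :=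
  ((v.2 : ℕ) + t ≤ n ∧ (v.2 : ℕ) % 2 = (v.1 : ℕ) % 2) ∨
  (t ≤ (v.2 : ℕ) + (v.1 : ℕ) ∧ ((v.2 : ℕ) + (v.1 : ℕ) - t) % 2 = 0)

/-- membership predicate for the component of `(1,0)` -/
def qpred (n t : ℕ) (v : Fin 2 × Fin n) : Prop :=
  ((v.2 : ℕ) + t ≤ n ∧ (v.2 : ℕ) % 2 = (1 - (v.1 : ℕ)) % 2) ∨
  (t ≤ (v.2 : ℕ) + (1 - (v.1 : ℕ)) ∧ ((v.2 : ℕ) + (1 - (v.1 : ℕ)) - t) % 2 = 0)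

instance (n t : ℕ) : DecidablePred (cpred n t) := fun _ => by unfold cpred; infer_instance
instance (n t : ℕ) : DecidablePred (qpred n t) := fun _ => by unfold qpred; infer_instance

variable {n t : ℕ}

lemma adj_of (h2t : n + 2 ≤ 2 * t) {x y : Fin 2 × Fin n}
    (h : (x.1.val = y.1.val ∧ (x.2.val = y.2.val + t ∨ y.2.val = x.2.val + t)) ∨
      ((x.1.val + 1 = y.1.val ∨ y.1.val + 1 = x.1.val) ∧
        (x.2.val + t = y.2.val + 1 ∨ y.2.val + t = x.2.val + 1))) :
    (tGraph 2 n t).Adj x y := by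
  have b1 := x.1.isLt; have b2 := y.1.isLt; have b3 := x.2.isLt; have b4 := y.2.isLt
  constructor
  · intro he
    rw [Prod.ext_iff, Fin.ext_iff, Fin.ext_iff] at he
    omega
  · rcases abs_cases ((x.1 : ℤ) - (y.1 : ℤ)) with ⟨e1, c1⟩ | ⟨e1, c1⟩ <;>
    rcases abs_cases ((x.2 : ℤ) - (y.2 : ℤ)) with ⟨e2, c2⟩ | ⟨e2, c2⟩ <;>
      rw [e1, e2] <;> omega

lemma adj_cpred (h2t : n + 2 ≤ 2 * t) {x y : Fin 2 × Fin n}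
    (h : (tGraph 2 n t).Adj x y) : cpred n t x ↔ cpred n t y := by
  obtain ⟨hne, habs⟩ := h
  have b1 := x.1.isLt; have b2 := y.1.isLt; have b3 := x.2.isLt; have b4 := y.2.isLt
  unfold cpred
  rcases abs_cases ((x.1 : ℤ) - (y.1 : ℤ)) with ⟨e1, c1⟩ | ⟨e1, c1⟩ <;>
  rcases abs_cases ((x.2 : ℤ) - (y.2 : ℤ)) with ⟨e2, c2⟩ | ⟨e2, c2⟩ <;>
    rw [e1, e2] at habs <;> omega

lemma adj_qpred (h2t : n + 2 ≤ 2 * t) {x y : Fin 2 × Fin n}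
    (h : (tGraph 2 n t).Adj x y) : qpred n t x ↔ qpred n t y := by
  obtain ⟨hne, habs⟩ := h
  have b1 := x.1.isLt; have b2 := y.1.isLt; have b3 := x.2.isLt; have b4 := y.2.isLt
  unfold qpred
  rcases abs_cases ((x.1 : ℤ) - (y.1 : ℤ)) with ⟨e1, c1⟩ | ⟨e1, c1⟩ <;>
  rcases abs_cases ((x.2 : ℤ) - (y.2 : ℤ)) with ⟨e2, c2⟩ | ⟨e2, c2⟩ <;>
    rw [e1, e2] at habs <;> omega

lemma adj_mem (h2t : n + 2 ≤ 2 * t) (htn : t ≤ n) {x y : Fin 2 × Fin n}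
    (h : (tGraph 2 n t).Adj x y) : cpred n t x ∨ qpred n t x := by
  obtain ⟨hne, habs⟩ := h
  have b1 := x.1.isLt; have b2 := y.1.isLt; have b3 := x.2.isLt; have b4 := y.2.isLt
  have hne' : x.1.val ≠ y.1.val ∨ x.2.val ≠ y.2.val := by
    by_contra hc
    push_neg at hc
    exact hne (Prod.ext (Fin.ext hc.1) (Fin.ext hc.2))
  unfold cpred qpred
  rcases abs_cases ((x.1 : ℤ) - (y.1 : ℤ)) with ⟨e1, c1⟩ | ⟨e1, c1⟩ <;>
  rcases abs_cases ((x.2 : ℤ) - (y.2 : ℤ)) with ⟨e2, c2⟩ | ⟨e2, c2⟩ <;>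
    rw [e1, e2] at habs <;> omega

lemma reach_cpred (h2t : n + 2 ≤ 2 * t) {x y : Fin 2 × Fin n}
    (h : (tGraph 2 n t).Reachable x y) : cpred n t x ↔ cpred n t y := by
  obtain ⟨w⟩ := h
  induction w with
  | nil => rfl
  | cons ha _ ih => exact (adj_cpred h2t ha).trans ih

lemma reach_qpred (h2t : n + 2 ≤ 2 * t) {x y : Fin 2 × Fin n}
    (h : (tGraph 2 n t).Reachable x y) : qpred n t x ↔ qpred n t y := by
  obtain ⟨w⟩ := h
  induction w with
  | nil => rfl
  | cons ha _ ih => exact (adj_qpred h2t ha).trans ih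

lemma reach_low (h2t : n + 2 ≤ 2 * t) (htn : t ≤ n) :
    ∀ j, ∀ _ : j ≤ n - t, ∀ i, ∀ hi : i < 2, j % 2 = i →
    (tGraph 2 n t).Reachable (⟨0, by omega⟩, ⟨0, by omega⟩) (⟨i, hi⟩, ⟨j, by omega⟩) := by
  intro j
  induction j using Nat.strong_induction_on with
  | _ j ih =>
    intro hj i hi hpar
    rcases Nat.eq_zero_or_pos j with h0 | hpos
    · have hi0 : i = 0 := by omega
      subst h0; subst hi0
      rfl
    · have r1 : (tGraph 2 n t).Reachable (⟨0, by omega⟩, ⟨0, by omega⟩)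
          (⟨1 - i, by omega⟩, ⟨j - 1, by omega⟩) :=
        ih (j - 1) (by omega) (by omega) (1 - i) (by omega) (by omega)
      have e1 : (tGraph 2 n t).Adj (⟨1 - i, by omega⟩, ⟨j - 1, by omega⟩)
          ((⟨1 - i, by omega⟩ : Fin 2), (⟨j - 1 + t, by omega⟩ : Fin n)) :=
        adj_of h2t (Or.inl ⟨rfl, Or.inr (show j - 1 + t = (j - 1) + t by omega)⟩)
      have e2 : (tGraph 2 n t).Adj ((⟨1 - i, by omega⟩ : Fin 2), (⟨j - 1 + t, by omega⟩ : Fin n))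
          (⟨i, hi⟩, ⟨j, by omega⟩) :=
        adj_of h2t (Or.inr ⟨show (1 - i) + 1 = i ∨ i + 1 = 1 - i by omega,
          Or.inr (show j + t = (j - 1 + t) + 1 by omega)⟩)
      exact r1.trans (e1.reachable.trans e2.reachable)

lemma reach_of_cpred (h2t : n + 2 ≤ 2 * t) (htn : t ≤ n) {v : Fin 2 × Fin n}
    (h : cpred n t v) :
    (tGraph 2 n t).Reachable (⟨0, by omega⟩, ⟨0, by omega⟩) v := by
  have hi := v.1.isLt; have hj := v.2.isLt
  have hveq : v = ((⟨v.1.val, hi⟩ : Fin 2), (⟨v.2.val, hj⟩ : Fin n)) := rfl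
  rcases h with ⟨h1, h2⟩ | ⟨h1, h2⟩
  · rw [hveq]
    exact reach_low h2t htn v.2.val (by omega) v.1.val hi (by omega)
  · rcases Nat.lt_or_ge v.2.val t with hlt | hge
    · -- then i = 1 and j = t - 1 : direct edge to (0,0)
      have e : (tGraph 2 n t).Adj (⟨0, by omega⟩, ⟨0, by omega⟩) v :=
        adj_of h2t (Or.inr ⟨show 0 + 1 = v.1.val ∨ v.1.val + 1 = 0 by omega,
          show 0 + t = v.2.val + 1 ∨ v.2.val + t = 0 + 1 by omega⟩)
      exact e.reachable
    · -- j ≥ t : edge from (i, j - t)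
      have r1 : (tGraph 2 n t).Reachable (⟨0, by omega⟩, ⟨0, by omega⟩)
          ((⟨v.1.val, hi⟩ : Fin 2), (⟨v.2.val - t, by omega⟩ : Fin n)) :=
        reach_low h2t htn (v.2.val - t) (by omega) v.1.val hi (by omega)
      have e : (tGraph 2 n t).Adj ((⟨v.1.val, hi⟩ : Fin 2), (⟨v.2.val - t, by omega⟩ : Fin n))
          v :=
        adj_of h2t (Or.inl ⟨rfl, Or.inr (show v.2.val = (v.2.val - t) + t by omega)⟩)
      rw [hveq]
      exact r1.trans e.reachable

/-- the row flip as a map -/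
def rflip (n : ℕ) (v : Fin 2 × Fin n) : Fin 2 × Fin n := (⟨1 - v.1.val, by omega⟩, v.2)

lemma rflip_adj {x y : Fin 2 × Fin n} (h : (tGraph 2 n t).Adj x y) :
    (tGraph 2 n t).Adj (rflip n x) (rflip n y) := by
  obtain ⟨hne, habs⟩ := h
  have b1 := x.1.isLt; have b2 := y.1.isLt; have b3 := x.2.isLt; have b4 := y.2.isLt
  constructor
  · intro he
    rw [Prod.ext_iff, Fin.ext_iff, Fin.ext_iff] at he
    apply hne
    rw [Prod.ext_iff, Fin.ext_iff, Fin.ext_iff]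
    simp only [rflip] at he
    omega
  · have hx1 : ((rflip n x).1 : ℤ) = 1 - (x.1 : ℤ) := by
      simp only [rflip]
      have := x.1.isLt
      push_cast
      omega
    have hy1 : ((rflip n y).1 : ℤ) = 1 - (y.1 : ℤ) := by
      simp only [rflip]
      have := y.1.isLt
      push_cast
      omega
    have hx2 : ((rflip n x).2 : ℤ) = (x.2 : ℤ) := rfl
    have hy2 : ((rflip n y).2 : ℤ) = (y.2 : ℤ) := rfl
    rw [hx1, hy1, hx2, hy2]
    rcases abs_cases ((x.1 : ℤ) - (y.1 : ℤ)) with ⟨e1, c1⟩ | ⟨e1, c1⟩ <;>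
    rcases abs_cases ((x.2 : ℤ) - (y.2 : ℤ)) with ⟨e2, c2⟩ | ⟨e2, c2⟩ <;>
      rw [e1, e2] at habs <;>
    rcases abs_cases ((1 - (x.1 : ℤ)) - (1 - (y.1 : ℤ))) with ⟨f1, d1⟩ | ⟨f1, d1⟩ <;>
      rw [f1] <;> rw [e2] <;> omega

lemma rflip_reach {x y : Fin 2 × Fin n} (h : (tGraph 2 n t).Reachable x y) :
    (tGraph 2 n t).Reachable (rflip n x) (rflip n y) := by
  obtain ⟨w⟩ := h
  induction w with
  | nil => rfl
  | cons ha _ ih => exact (rflip_adj ha).reachable.trans ih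

lemma rflip_rflip (v : Fin 2 × Fin n) : rflip n (rflip n v) = v := by
  have := v.1.isLt
  exact Prod.ext (Fin.ext (show 1 - (1 - v.1.val) = v.1.val by omega)) rfl

lemma qpred_iff_cpred_rflip (v : Fin 2 × Fin n) :
    qpred n t v ↔ cpred n t (rflip n v) := Iff.rfl

lemma reach_of_qpred (h2t : n + 2 ≤ 2 * t) (htn : t ≤ n) {v : Fin 2 × Fin n}
    (h : qpred n t v) :
    (tGraph 2 n t).Reachable (⟨1, by omega⟩, ⟨0, by omega⟩) v := by
  rw [qpred_iff_cpred_rflip] at h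
  have r := rflip_reach (n := n) (t := t) (reach_of_cpred h2t htn h)
  rw [rflip_rflip] at r
  exact r


lemma card_pred_aux (h2t : n + 2 ≤ 2 * t) (htn : t ≤ n)
    (p : Fin 2 × Fin n → Prop) [DecidablePred p]
    (hp : ∀ v, p v ↔ (((v.2 : ℕ) + t ≤ n ∧ (v.2 : ℕ) % 2 = (v.1 : ℕ) % 2) ∨
      (t ≤ (v.2 : ℕ) + (v.1 : ℕ) ∧ ((v.2 : ℕ) + (v.1 : ℕ) - t) % 2 = 0))) :
    Nat.card {v : Fin 2 × Fin n | p v} = 2 * (n - t) + 2 := by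
  rw [Nat.card_coe_set_eq, Set.ncard_eq_toFinset_card', Set.toFinset_setOf,
    Finset.card_filter, Fintype.sum_prod_type, Fin.sum_univ_two, ← Finset.sum_add_distrib]
  have key : ∀ j : Fin n,
      ((if p (0, j) then 1 else 0) + (if p (1, j) then 1 else 0) : ℕ) =
      (if (j : ℕ) + t ≤ n then 1 else 0) + (if t ≤ (j : ℕ) + 1 then 1 else 0) := by
    intro j
    have hj := j.isLt
    have h0 := hp (0, j)
    have h1 := hp (1, j)
    simp only [Fin.val_zero, Fin.val_one] at h0 h1
    split_ifs with a b c d <;> rw [h0] at a <;> rw [h1] at * <;> omega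
  rw [Finset.sum_congr rfl (fun j _ => key j), Finset.sum_add_distrib,
    Fin.sum_univ_eq_sum_range (fun k => if k + t ≤ n then 1 else 0),
    Fin.sum_univ_eq_sum_range (fun k => if t ≤ k + 1 then 1 else 0),
    ← Finset.card_filter, ← Finset.card_filter]
  have e1 : (Finset.range n).filter (fun k => k + t ≤ n) = Finset.range (n - t + 1) := by
    ext k; simp [Finset.mem_filter]; omega
  have e2 : (Finset.range n).filter (fun k => t ≤ k + 1) = Finset.Ico (t - 1) n := by
    ext k; simp [Finset.mem_filter]; omega
  rw [e1, e2, Finset.card_range, Nat.card_Ico]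
  omega

lemma card_cpred (h2t : n + 2 ≤ 2 * t) (htn : t ≤ n) :
    Nat.card {v : Fin 2 × Fin n | cpred n t v} = 2 * (n - t) + 2 :=
  card_pred_aux h2t htn (cpred n t) (fun _ => Iff.rfl)

lemma card_qpred (h2t : n + 2 ≤ 2 * t) (htn : t ≤ n) :
    Nat.card {v : Fin 2 × Fin n | qpred n t v} = 2 * (n - t) + 2 := by
  have hinv : Function.Involutive (rflip n) := rflip_rflip
  have hequiv : {v : Fin 2 × Fin n | qpred n t v} ≃ {v : Fin 2 × Fin n | cpred n t v} :=
    (hinv.toPerm).subtypeEquiv (fun v => (qpred_iff_cpred_rflip (t := t) v))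
  rw [Nat.card_congr hequiv]
  exact card_cpred h2t htn

lemma isolated_of_not_pred (h2t : n + 2 ≤ 2 * t) (htn : t ≤ n) {v : Fin 2 × Fin n}
    (hc : ¬ cpred n t v) (hq : ¬ qpred n t v) {w : Fin 2 × Fin n}
    (h : (tGraph 2 n t).Reachable v w) : w = v := by
  obtain ⟨walk⟩ := h
  cases walk with
  | nil => rfl
  | cons ha _ =>
    rcases adj_mem h2t htn ha with h | h
    · exact absurd h hc
    · exact absurd h hq

end TGraphAux

open TGraphAux in
/-- For `n ≥ 2` and `⌈n/2⌉ < t ≤ n`, exactly two connected components of the `t`-graph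
`Γ(2,n,t)` of the dihedral group `D_n` contain more than one vertex, and each of these
two components has exactly `2(n - t) + 2` vertices. -/
theorem dihedral_tGraph_two_nontrivial_components (n t : ℕ) (hn : 2 ≤ n)
    (htlb : (n + 1) / 2 < t) (htn : t ≤ n) :
    ∃ C₁ C₂ : (tGraph 2 n t).ConnectedComponent, C₁ ≠ C₂ ∧
      (∀ C : (tGraph 2 n t).ConnectedComponent, 1 < Nat.card C.supp ↔ C = C₁ ∨ C = C₂) ∧
      Nat.card C₁.supp = 2 * (n - t) + 2 ∧ Nat.card C₂.supp = 2 * (n - t) + 2 := by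
  have h2t : n + 2 ≤ 2 * t := by omega
  set G := tGraph 2 n t with hG
  set v0 : Fin 2 × Fin n := (⟨0, by omega⟩, ⟨0, by omega⟩) with hv0
  set v1 : Fin 2 × Fin n := (⟨1, by omega⟩, ⟨0, by omega⟩) with hv1
  have hcv0 : cpred n t v0 :=
    Or.inl ⟨show 0 + t ≤ n by omega, rfl⟩
  have hqv1 : qpred n t v1 :=
    Or.inl ⟨show 0 + t ≤ n by omega, rfl⟩
  have hcv1 : ¬ cpred n t v1 := by
    show ¬ ((0 + t ≤ n ∧ 0 % 2 = 1 % 2) ∨ (t ≤ 0 + 1 ∧ (0 + 1 - t) % 2 = 0))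
    omega
  have hqv0 : ¬ qpred n t v0 := by
    show ¬ ((0 + t ≤ n ∧ 0 % 2 = (1 - 0) % 2) ∨ (t ≤ 0 + (1 - 0) ∧ (0 + (1 - 0) - t) % 2 = 0))
    omega
  have hsupp0 : (G.connectedComponentMk v0).supp = {v | cpred n t v} := by
    ext v
    rw [SimpleGraph.ConnectedComponent.mem_supp_iff, SimpleGraph.ConnectedComponent.eq,
      Set.mem_setOf_eq]
    constructor
    · intro h
      exact (reach_cpred h2t h).mpr hcv0
    · intro h
      exact (reach_of_cpred h2t htn h).symm
  have hsupp1 : (G.connectedComponentMk v1).supp = {v | qpred n t v} := by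
    ext v
    rw [SimpleGraph.ConnectedComponent.mem_supp_iff, SimpleGraph.ConnectedComponent.eq,
      Set.mem_setOf_eq]
    constructor
    · intro h
      exact (reach_qpred h2t h).mpr hqv1
    · intro h
      exact (reach_of_qpred h2t htn h).symm
  have hcard0 : Nat.card (G.connectedComponentMk v0).supp = 2 * (n - t) + 2 := by
    rw [hsupp0]; exact card_cpred h2t htn
  have hcard1 : Nat.card (G.connectedComponentMk v1).supp = 2 * (n - t) + 2 := by
    rw [hsupp1]; exact card_qpred h2t htn
  refine ⟨G.connectedComponentMk v0, G.connectedComponentMk v1, ?_, ?_, hcard0, hcard1⟩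
  · intro h
    rw [SimpleGraph.ConnectedComponent.eq] at h
    exact hcv1 ((reach_cpred h2t h.symm).mpr hcv0)
  · intro C
    constructor
    · intro hcard
      by_contra hne
      push_neg at hne
      obtain ⟨v, hv⟩ := C.exists_rep
      have hv' : G.connectedComponentMk v = C := hv
      have hvc : ¬ cpred n t v := by
        intro h
        exact hne.1 (hv' ▸ SimpleGraph.ConnectedComponent.eq.mpr (reach_of_cpred h2t htn h).symm)
      have hvq : ¬ qpred n t v := by
        intro h
        exact hne.2 (hv' ▸ SimpleGraph.ConnectedComponent.eq.mpr (reach_of_qpred h2t htn h).symm)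
      have hsingle : (G.connectedComponentMk v).supp = {v} := by
        ext w
        rw [SimpleGraph.ConnectedComponent.mem_supp_iff, SimpleGraph.ConnectedComponent.eq,
          Set.mem_singleton_iff]
        constructor
        · intro h
          exact isolated_of_not_pred h2t htn hvc hvq h.symm
        · rintro rfl
          rfl
      rw [← hv', hsingle, Nat.card_coe_set_eq, Set.ncard_singleton] at hcard
      omega
    · rintro (rfl | rfl)
      · rw [hcard0]; omega
      · rw [hcard1]; omega
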